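/- arXiv:2207.12128 — 2 statements merged into one kernel-verified Lean document; each statement's English description precedes it below -/
import Mathlib

section
/- Let G be a broken wheel with principal path P = p p' p'' and let L be a list-assignment for G with |L(v)| ≥ 3 for every vertex v ∈ V(G) \ {p, p'}. Let φ₀ and φ₁ be two distinct L-colorings of the edge pp', and for i = 0, 1 set Sᵢ := Λ_G(φᵢ(p), φᵢ(p'), •); suppose |S₀| = |S₁| = 1. If φ₀(p) ≠ φ₁(p) and S₀ = S₁, then the path G − p' has an odd number of edges and (φ₀(p), φ₀(p')) = (φ₁(p'), φ₁(p)). -/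
/-- Vertex type of a broken wheel whose hub-deleted path `p u₁ … u_t p''` has `t + 2`
vertices: `some i` is the `i`-th path vertex (so `some 0 = p` and
`some (Fin.last (t+1)) = p''`), and `none` is the hub `p'`. -/
abbrev BWVert (t : ℕ) := Option (Fin (t + 2))

/-- Adjacency in the broken wheel: the hub `p'` is adjacent to every path vertex, and
two path vertices are adjacent exactly when they are consecutive. -/
def bwAdj (t : ℕ) : BWVert t → BWVert t → Prop
  | none, none => False
  | none, some _ => True
  | some _, none => True
  | some i, some j => i.val + 1 = j.val ∨ j.val + 1 = i.val

/-- An `L`-coloring of (all of) the broken wheel. -/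
def IsBWColoring (t : ℕ) (L : BWVert t → Finset ℕ) (c : BWVert t → ℕ) : Prop :=
  (∀ v, c v ∈ L v) ∧ ∀ v w, bwAdj t v w → c v ≠ c w

/-- `Λ_G(a, b, •)`: the set of colors `x` such that some `L`-coloring of the broken wheel
uses `a, b, x` on `p, p', p''` respectively. -/
def Lambda (t : ℕ) (L : BWVert t → Finset ℕ) (a b : ℕ) : Set ℕ :=
  {x | ∃ c : BWVert t → ℕ, IsBWColoring t L c ∧
    c (some 0) = a ∧ c none = b ∧ c (some (Fin.last (t + 1))) = x}

namespace BWAux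

open Fin.NatCast

lemma val_cast (t j : ℕ) (h : j ≤ t + 1) : ((j : Fin (t+2)) : ℕ) = j := by
  rw [Fin.val_natCast, Nat.mod_eq_of_lt (by omega)]

lemma cast_last (t : ℕ) : ((t+1 : ℕ) : Fin (t+2)) = Fin.last (t+1) := by
  ext
  rw [Fin.val_last, Fin.val_natCast, Nat.mod_eq_of_lt (by omega)]

lemma adj_consec (t j : ℕ) (h : j + 1 ≤ t + 1) :
    bwAdj t (some (j : Fin (t+2))) (some ((j+1 : ℕ) : Fin (t+2))) := by
  show _ ∨ _
  left
  rw [val_cast t j (by omega), val_cast t (j+1) h]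

/-- reachable colors at path vertex `i` with `p = a`, hub `= b`. -/
def Reach (t : ℕ) (L : BWVert t → Finset ℕ) (a b : ℕ) : ℕ → Set ℕ
  | 0 => {a}
  | i+1 => {x | x ∈ L (some ((i+1 : ℕ) : Fin (t+2))) ∧ x ≠ b ∧ ∃ y ∈ Reach t L a b i, y ≠ x}

variable {t : ℕ} {L : BWVert t → Finset ℕ} {a b : ℕ}

lemma lambda_subset_reach (x : ℕ) (hx : x ∈ Lambda t L a b) : x ∈ Reach t L a b (t+1) := by
  obtain ⟨c, ⟨hmem, hadj⟩, hp, hhub, hpp⟩ := hx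
  have key : ∀ j, j ≤ t + 1 → c (some ((j : ℕ) : Fin (t+2))) ∈ Reach t L a b j := by
    intro j
    induction j with
    | zero =>
      intro _
      show c (some ((0:ℕ) : Fin (t+2))) = a
      rw [Nat.cast_zero]
      exact hp
    | succ i ih =>
      intro hle
      refine ⟨hmem _, ?_, ⟨c (some ((i : ℕ) : Fin (t+2))), ih (by omega), ?_⟩⟩
      · have := hadj (some ((i+1 : ℕ) : Fin (t+2))) none trivial
        rw [hhub] at this
        exact this
      · exact hadj _ _ (adj_consec t i hle)
  have := key (t+1) le_rfl
  rwa [cast_last, hpp] at this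

lemma reach_subset_lambda (ha : a ∈ L (some 0)) (hb : b ∈ L none) (hab : a ≠ b)
    (x : ℕ) (hx : x ∈ Reach t L a b (t+1)) : x ∈ Lambda t L a b := by
  -- build a prefix chain
  have key : ∀ i, i ≤ t + 1 → ∀ x, x ∈ Reach t L a b i →
      ∃ d : ℕ → ℕ, d 0 = a ∧ d i = x ∧
        (∀ j, 1 ≤ j → j ≤ i → d j ∈ L (some ((j : ℕ) : Fin (t+2))) ∧ d j ≠ b) ∧
        (∀ j, j < i → d j ≠ d (j+1)) := by
    intro i
    induction i with
    | zero =>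
      intro _ x hx
      have : x = a := hx
      exact ⟨fun _ => a, rfl, this ▸ rfl, fun j h1 h2 => by omega, fun j h => by omega⟩
    | succ i ih =>
      intro hle x hx
      obtain ⟨hmem, hxb, y, hy, hyx⟩ := hx
      obtain ⟨d, hd0, hdi, hdmem, hdadj⟩ := ih (by omega) y hy
      refine ⟨fun j => if j ≤ i then d j else x, by simp [hd0], by simp, ?_, ?_⟩
      · intro j h1 h2
        by_cases hj : j ≤ i
        · simpa [hj] using hdmem j h1 hj
        · have : j = i + 1 := by omega
          subst this
          simp only [if_neg hj]
          exact ⟨hmem, hxb⟩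
      · intro j hj
        by_cases hj' : j + 1 ≤ i
        · simp only [if_pos (by omega : j ≤ i), if_pos hj']
          exact hdadj j (by omega)
        · have hji : j = i := by omega
          subst hji
          simp only [le_refl, if_pos, if_neg (by omega : ¬ j + 1 ≤ j)]
          rw [hdi]
          exact hyx
  obtain ⟨d, hd0, hdl, hdmem, hdadj⟩ := key (t+1) le_rfl x hx
  refine ⟨fun v => v.elim b (fun f => d f.val), ⟨?_, ?_⟩, by simpa using hd0, rfl, ?_⟩
  · rintro (_ | f)
    · exact hb
    · by_cases hf : f.val = 0
      · have : f = 0 := Fin.ext (by simpa using hf)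
        subst this
        simpa [hd0] using ha
      · have h1 : (1:ℕ) ≤ f.val := by omega
        have h2 : f.val ≤ t + 1 := by omega
        have := (hdmem f.val h1 h2).1
        rwa [show ((f.val : ℕ) : Fin (t+2)) = f from Fin.cast_val_eq_self f] at this
  · have hdb : ∀ j, j ≤ t + 1 → d j ≠ b := by
      intro j hj
      rcases Nat.eq_zero_or_pos j with h | h
      · subst h; rw [hd0]; exact hab
      · exact (hdmem j h hj).2
    rintro (_ | f) (_ | g) hadj
    · exact absurd hadj id
    · exact (hdb g.val (by omega)).symm
    · exact hdb f.val (by omega)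
    · rcases hadj with h | h
      · have := hdadj f.val (by omega)
        rwa [h] at this
      · have := (hdadj g.val (by omega)).symm
        rwa [h] at this
  · simp only [Option.elim]
    rw [Fin.val_last]
    exact hdl

lemma lambda_eq_reach (ha : a ∈ L (some 0)) (hb : b ∈ L none) (hab : a ≠ b) :
    Lambda t L a b = Reach t L a b (t+1) :=
  Set.eq_of_subset_of_subset (fun x hx => lambda_subset_reach x hx)
    (fun x hx => reach_subset_lambda ha hb hab x hx)

lemma card_ge (hL : ∀ v : BWVert t, v ≠ some 0 → v ≠ none → 3 ≤ (L v).card)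
    (i : ℕ) (h1 : 1 ≤ i) (h2 : i ≤ t + 1) : 3 ≤ (L (some ((i : ℕ) : Fin (t+2)))).card := by
  apply hL
  · intro hc
    have h0 : ((i : ℕ) : Fin (t+2)) = 0 := Option.some.inj hc
    have := congrArg Fin.val h0
    rw [val_cast t i h2, Fin.val_zero] at this
    omega
  · simp

lemma reach_nonempty (hL : ∀ v : BWVert t, v ≠ some 0 → v ≠ none → 3 ≤ (L v).card)
    (i : ℕ) (h : i ≤ t + 1) : (Reach t L a b i).Nonempty := by
  induction i with
  | zero => exact ⟨a, rfl⟩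
  | succ i ih =>
    obtain ⟨y, hy⟩ := ih (by omega)
    have hcard : 3 ≤ (L (some ((i+1 : ℕ) : Fin (t+2)))).card := card_ge hL (i+1) (by omega) h
    have : ((L (some ((i+1 : ℕ) : Fin (t+2)))) \ {b, y}).Nonempty := by
      rw [← Finset.card_pos]
      have h1 := Finset.card_le_card_sdiff_add_card (s := L (some ((i+1 : ℕ) : Fin (t+2)))) (t := ({b, y} : Finset ℕ))
      have h2 : ({b, y} : Finset ℕ).card ≤ 2 := le_trans (Finset.card_insert_le _ _) (by simp)
      omega
    obtain ⟨x, hx⟩ := this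
    rw [Finset.mem_sdiff] at hx
    have hxb : x ≠ b := fun hc => hx.2 (by simp [hc])
    have hxy : x ≠ y := fun hc => hx.2 (by simp [hc])
    exact ⟨x, hx.1, hxb, y, hy, fun hc => hxy hc.symm⟩

lemma reach_two (hL : ∀ v : BWVert t, v ≠ some 0 → v ≠ none → 3 ≤ (L v).card)
    (i : ℕ) (h : i + 1 ≤ t + 1)
    (htwo : ∃ x y, x ∈ Reach t L a b i ∧ y ∈ Reach t L a b i ∧ x ≠ y) :
    ∃ x y, x ∈ Reach t L a b (i+1) ∧ y ∈ Reach t L a b (i+1) ∧ x ≠ y := by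
  obtain ⟨x, y, hx, hy, hxy⟩ := htwo
  have hcard : 3 ≤ (L (some ((i+1 : ℕ) : Fin (t+2)))).card := card_ge hL (i+1) (by omega) h
  have h2 : 2 ≤ ((L (some ((i+1 : ℕ) : Fin (t+2)))).erase b).card := by
    have := Finset.pred_card_le_card_erase (a := b) (s := L (some ((i+1 : ℕ) : Fin (t+2))))
    omega
  obtain ⟨z₁, hz₁, z₂, hz₂, hz⟩ := Finset.one_lt_card.mp h2
  have hmem : ∀ z ∈ (L (some ((i+1 : ℕ) : Fin (t+2)))).erase b, z ∈ Reach t L a b (i+1) := by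
    intro z hz
    rw [Finset.mem_erase] at hz
    refine ⟨hz.2, hz.1, ?_⟩
    by_cases hzx : z = x
    · exact ⟨y, hy, fun hc => hxy (hc.trans hzx).symm⟩
    · exact ⟨x, hx, fun hc => hzx hc.symm⟩
  exact ⟨z₁, z₂, hmem z₁ hz₁, hmem z₂ hz₂, hz⟩

lemma forcing (hL : ∀ v : BWVert t, v ≠ some 0 → v ≠ none → 3 ≤ (L v).card)
    (ha : a ∈ L (some 0)) (hb : b ∈ L none) (hab : a ≠ b)
    (hS : (Lambda t L a b).ncard = 1) :
    ∃ r : ℕ → ℕ, r 0 = a ∧ Lambda t L a b = {r (t+1)} ∧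
      ∀ i, i < t + 1 → L (some ((i+1 : ℕ) : Fin (t+2))) = {b, r i, r (i+1)} ∧
        r (i+1) ≠ b ∧ r (i+1) ≠ r i ∧ b ≠ r i := by
  have hfin : (Reach t L a b (t+1)).Finite :=
    Set.Finite.subset (L (some ((t+1 : ℕ) : Fin (t+2)))).finite_toSet (fun x hx => hx.1)
  have hlam := lambda_eq_reach (t := t) (L := L) ha hb hab
  -- no two distinct elements in any Reach i, i ≤ t+1
  have hnotwo : ∀ i, i ≤ t + 1 →
      ¬ ∃ x y, x ∈ Reach t L a b i ∧ y ∈ Reach t L a b i ∧ x ≠ y := by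
    intro i hi htwo
    have hprop : ∀ j, i ≤ j → j ≤ t + 1 →
        ∃ x y, x ∈ Reach t L a b j ∧ y ∈ Reach t L a b j ∧ x ≠ y := by
      intro j hij
      induction j, hij using Nat.le_induction with
      | base => intro _; exact htwo
      | succ j hij ih => intro hj; exact reach_two hL j hj (ih (by omega))
    obtain ⟨x, y, hx, hy, hxy⟩ := hprop (t+1) hi le_rfl
    have h2 : 2 ≤ (Reach t L a b (t+1)).ncard := by
      have : ({x, y} : Set ℕ) ⊆ Reach t L a b (t+1) := by
        intro z hz
        rcases hz with hz | hz
        · exact hz ▸ hx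
        · exact hz ▸ hy
      calc 2 = ({x, y} : Set ℕ).ncard := (Set.ncard_pair hxy).symm
        _ ≤ (Reach t L a b (t+1)).ncard := Set.ncard_le_ncard this hfin
    rw [← hlam, hS] at h2
    omega
  have hsing : ∀ i, ∃ z, i ≤ t + 1 → Reach t L a b i = {z} := by
    intro i
    by_cases hi : i ≤ t + 1
    · obtain ⟨z, hz⟩ := reach_nonempty hL i hi
      refine ⟨z, fun _ => Set.eq_singleton_iff_unique_mem.mpr ⟨hz, fun y hy => ?_⟩⟩
      by_contra hyz
      exact hnotwo i hi ⟨y, z, hy, hz, hyz⟩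
    · exact ⟨0, fun hc => absurd hc hi⟩
  obtain ⟨r, hr⟩ := Classical.skolem.mp hsing
  have hr0 : r 0 = a := by
    have : a ∈ Reach t L a b 0 := rfl
    rw [hr 0 (by omega)] at this
    exact this.symm
  refine ⟨r, hr0, by rw [hlam, hr (t+1) le_rfl], ?_⟩
  intro i hi
  have hiff : ∀ x : ℕ,
      (x ∈ L (some ((i+1 : ℕ) : Fin (t+2))) ∧ x ≠ b ∧ x ≠ r i) ↔ x = r (i+1) := by
    intro x
    constructor
    · rintro ⟨h1, h2, h3⟩
      have : x ∈ Reach t L a b (i+1) :=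
        ⟨h1, h2, r i, by rw [hr i (by omega)]; rfl, fun hc => h3 hc.symm⟩
      rwa [hr (i+1) (by omega)] at this
    · rintro rfl
      have hmem : r (i+1) ∈ Reach t L a b (i+1) := by
        rw [hr (i+1) (by omega)]; rfl
      obtain ⟨h1, h2, y, hy, hyx⟩ := hmem
      rw [hr i (by omega)] at hy
      have hyri : y = r i := hy
      exact ⟨h1, h2, fun hc => hyx (by rw [hyri, ← hc])⟩
  have hcard : 3 ≤ (L (some ((i+1 : ℕ) : Fin (t+2)))).card := card_ge hL (i+1) (by omega) (by omega)
  have hsub : L (some ((i+1 : ℕ) : Fin (t+2))) ⊆ {b, r i, r (i+1)} := by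
    intro x hx
    simp only [Finset.mem_insert, Finset.mem_singleton]
    by_cases h2 : x = b
    · exact Or.inl h2
    by_cases h3 : x = r i
    · exact Or.inr (Or.inl h3)
    exact Or.inr (Or.inr ((hiff x).mp ⟨hx, h2, h3⟩))
  have heq : L (some ((i+1 : ℕ) : Fin (t+2))) = {b, r i, r (i+1)} := by
    apply Finset.eq_of_subset_of_card_le hsub
    calc ({b, r i, r (i+1)} : Finset ℕ).card ≤ 3 := by
          apply le_trans (Finset.card_insert_le _ _)
          have := Finset.card_insert_le (r i) ({r (i+1)} : Finset ℕ)
          simp at this ⊢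
          omega
      _ ≤ _ := hcard
  have hdist := (hiff (r (i+1))).mpr rfl
  have hbri : b ≠ r i := by
    intro hc
    have h2 : (({b, r i, r (i+1)} : Finset ℕ)).card ≤ 2 := by
      rw [hc, Finset.insert_idem]
      apply le_trans (Finset.card_insert_le _ _)
      simp
    rw [heq] at hcard
    omega
  exact ⟨heq, hdist.2.1, hdist.2.2, hbri⟩

end BWAux


/-- Theorem 2.4(1)(C): if `φ₀, φ₁` are distinct `L`-colorings of the edge `pp'` with
`|S₀| = |S₁| = 1`, `φ₀(p) ≠ φ₁(p)` and `S₀ = S₁`, then the path `G - p'` has an odd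
number of edges and `(φ₀(p), φ₀(p')) = (φ₁(p'), φ₁(p))`. -/
theorem bwheel_diff_p_same_S_odd (t : ℕ) (L : BWVert t → Finset ℕ)
    (hL : ∀ v : BWVert t, v ≠ some 0 → v ≠ none → 3 ≤ (L v).card)
    (a₀ b₀ a₁ b₁ : ℕ)
    (ha₀ : a₀ ∈ L (some 0)) (hb₀ : b₀ ∈ L none) (hne₀ : a₀ ≠ b₀)
    (ha₁ : a₁ ∈ L (some 0)) (hb₁ : b₁ ∈ L none) (hne₁ : a₁ ≠ b₁)
    (hdistinct : (a₀, b₀) ≠ (a₁, b₁))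
    (hS₀ : (Lambda t L a₀ b₀).ncard = 1) (hS₁ : (Lambda t L a₁ b₁).ncard = 1)
    (hp : a₀ ≠ a₁) (hS : Lambda t L a₀ b₀ = Lambda t L a₁ b₁) :
    Odd (t + 1) ∧ a₀ = b₁ ∧ b₀ = a₁ := by

  obtain ⟨r, hr0, hrL, hrT⟩ := BWAux.forcing hL ha₀ hb₀ hne₀ hS₀
  obtain ⟨s, hs0, hsL, hsT⟩ := BWAux.forcing hL ha₁ hb₁ hne₁ hS₁
  have hend : r (t+1) = s (t+1) := by
    have : ({r (t+1)} : Set ℕ) = {s (t+1)} := by rw [← hrL, ← hsL, hS]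
    simpa [Set.singleton_eq_singleton_iff] using this
  -- b₀ ≠ b₁
  have hbb : b₀ ≠ b₁ := by
    intro hb
    subst hb
    have hsame : ∀ k, k ≤ t + 1 → r (t + 1 - k) = s (t + 1 - k) := by
      intro k
      induction k with
      | zero => intro _; simpa using hend
      | succ k ih =>
        intro hk
        have hik := ih (by omega)
        have h1 : t + 1 - k = (t - k) + 1 := by omega
        have h2 : t + 1 - (k + 1) = t - k := by omega
        rw [h1] at hik
        rw [h2]
        set i := t - k with hidef
        obtain ⟨hEr, hd1, hd2, hd3⟩ := hrT i (by omega)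
        obtain ⟨hEs, he1, he2, he3⟩ := hsT i (by omega)
        have hmem : r i ∈ ({b₀, s i, s (i+1)} : Finset ℕ) := by
          rw [← hEs, hEr]
          simp
        simp only [Finset.mem_insert, Finset.mem_singleton] at hmem
        rcases hmem with h | h | h
        · exact absurd h.symm hd3
        · exact h
        · rw [← hik] at h
          exact absurd h.symm hd2
    have := hsame (t+1) le_rfl
    simp only [Nat.sub_self] at this
    rw [hr0, hs0] at this
    exact hp this
  -- alternation
  have halt : ∀ k, k ≤ t + 1 →
      (Even k → r (t + 1 - k) = s (t + 1 - k)) ∧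
      (Odd k → r (t + 1 - k) = b₁ ∧ s (t + 1 - k) = b₀) := by
    intro k
    induction k with
    | zero =>
      intro _
      exact ⟨fun _ => by simpa using hend, fun h => absurd h (by simp)⟩
    | succ k ih =>
      intro hk
      have ihk := ih (by omega)
      have h1 : t + 1 - k = (t - k) + 1 := by omega
      have h2 : t + 1 - (k + 1) = t - k := by omega
      rw [h1] at ihk
      rw [h2]
      set i := t - k with hidef
      obtain ⟨hEr, hd1, hd2, hd3⟩ := hrT i (by omega)
      obtain ⟨hEs, he1, he2, he3⟩ := hsT i (by omega)
      have hE : ({b₀, r i, r (i+1)} : Finset ℕ) = {b₁, s i, s (i+1)} := by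
        rw [← hEr, hEs]
      rcases Nat.even_or_odd k with hkE | hkO
      · -- r(i+1) = s(i+1) = x
        have hik := ihk.1 hkE
        refine ⟨fun h => absurd hkE (Nat.even_add_one.mp h), fun _ => ?_⟩
        constructor
        · -- b₁ ∈ LHS
          have hmem : b₁ ∈ ({b₀, r i, r (i+1)} : Finset ℕ) := by rw [hE]; simp
          simp only [Finset.mem_insert, Finset.mem_singleton] at hmem
          rcases hmem with h | h | h
          · exact absurd h.symm hbb
          · exact h.symm
          · rw [hik] at h
            exact absurd h.symm he1
        · have hmem : b₀ ∈ ({b₁, s i, s (i+1)} : Finset ℕ) := by rw [← hE]; simp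
          simp only [Finset.mem_insert, Finset.mem_singleton] at hmem
          rcases hmem with h | h | h
          · exact absurd h hbb
          · exact h.symm
          · rw [← hik] at h
            exact absurd h.symm hd1
      · -- r(i+1) = b₁, s(i+1) = b₀
        obtain ⟨hik1, hik2⟩ := ihk.2 hkO
        refine ⟨fun _ => ?_, fun h => absurd hkO (Nat.odd_add_one.mp h)⟩
        have hmem : r i ∈ ({b₁, s i, s (i+1)} : Finset ℕ) := by rw [← hE]; simp
        simp only [Finset.mem_insert, Finset.mem_singleton] at hmem
        rcases hmem with h | h | h
        · rw [← hik1] at h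
          exact absurd h.symm hd2
        · exact h
        · rw [hik2] at h
          exact absurd h.symm hd3
  have hfin := halt (t+1) le_rfl
  rcases Nat.even_or_odd (t+1) with hE | hO
  · have := hfin.1 hE
    simp only [Nat.sub_self] at this
    rw [hr0, hs0] at this
    exact absurd this hp
  · have := hfin.2 hO
    simp only [Nat.sub_self] at this
    rw [hr0, hs0] at this
    exact ⟨hO, this.1, this.2.symm⟩
end

section
/- Let G be a broken wheel with principal path P = p₀ q p₁ (so q is the vertex adjacent to all others) and let L be a list-assignment for G with |L(v)| ≥ 3 for every v ∈ V(G) \ {p₀, q, p₁} and with L(p₀), L(p₁) nonempty. Let i ∈ {0, 1} with |L(p_i)| ≥ 2, and suppose that no color of L(p_i) is (P, G)-universal, i.e., for every a ∈ L(p_i) there exist b ∈ L(q) \ {a} and c ∈ L(p₁₋ᵢ) \ {b} such that no L-coloring of G assigns a, b, c to p_i, q, p₁₋ᵢ respectively. Then either |V(G)| ≤ 4 or, letting p_i x y denote the initial 2-path of the path G − q starting at p_i, one has L(p_i) ⊆ L(x) ∩ L(y). -/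
/-- `(a, b, cc)` is an `L`-coloring of the principal path `P = p₀ q p₁` (colors listed
in the order `p₀, q, p₁`); note that `p₀` and `p₁` are themselves adjacent exactly when
`t = 0`. -/
def IsPColoring (t : ℕ) (L : BWVert t → Finset ℕ) (a b cc : ℕ) : Prop :=
  a ∈ L (some 0) ∧ b ∈ L none ∧ cc ∈ L (some (Fin.last (t + 1))) ∧
  a ≠ b ∧ b ≠ cc ∧ (bwAdj t (some 0) (some (Fin.last (t + 1))) → a ≠ cc)

/-- The coloring `a, b, cc` of `p₀, q, p₁` extends to an `L`-coloring of the whole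
broken wheel. -/
def ExtendsToBW (t : ℕ) (L : BWVert t → Finset ℕ) (a b cc : ℕ) : Prop :=
  ∃ c : BWVert t → ℕ, IsBWColoring t L c ∧
    c (some 0) = a ∧ c none = b ∧ c (some (Fin.last (t + 1))) = cc

def bwPick (s : Finset ℕ) : ℕ := if h : s.Nonempty then s.min' h else 0

lemma bwPick_mem {s : Finset ℕ} (h : s.Nonempty) : bwPick s ∈ s := by
  rw [bwPick, dif_pos h]; exact s.min'_mem h

lemma bw_sdiff_pair_nonempty {s : Finset ℕ} (h : 3 ≤ s.card) (x y : ℕ) :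
    (s \ {x, y}).Nonempty := by
  rw [← Finset.card_pos]
  have h1 : ({x, y} : Finset ℕ).card ≤ 2 :=
    le_trans (Finset.card_insert_le _ _) (by simp)
  have h2 := Finset.card_le_card_sdiff_add_card (s := s) (t := ({x, y} : Finset ℕ))
  omega

def bwVtx (t k : ℕ) : BWVert t := some ⟨min k (t + 1), by omega⟩

lemma bwVtx_eq (t : ℕ) (j : Fin (t + 2)) : bwVtx t j.val = some j := by
  have hj := j.isLt
  unfold bwVtx
  congr 1
  exact Fin.ext (by simp; omega)

lemma bwVtx_zero (t : ℕ) : bwVtx t 0 = some 0 := by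
  simpa using bwVtx_eq t 0

lemma bwVtx_last (t : ℕ) : bwVtx t (t + 1) = some (Fin.last (t + 1)) := by
  simpa using bwVtx_eq t (Fin.last (t + 1))

lemma bw_extend (t : ℕ) (ht : 2 ≤ t) (L : BWVert t → Finset ℕ)
    (hL : ∀ m : ℕ, 1 ≤ m → m ≤ t → 3 ≤ (L (bwVtx t m)).card)
    (a b cc : ℕ) (ha : a ∈ L (some 0)) (hb : b ∈ L none)
    (hcc : cc ∈ L (some (Fin.last (t + 1))))
    (hab : a ≠ b) (hbcc : b ≠ cc)
    (hcase : a ∉ L (bwVtx t 1) ∨ b ∉ L (bwVtx t 2) ∨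
      ∃ z ∈ L (bwVtx t 1), z ≠ a ∧ z ≠ b ∧ z ∉ L (bwVtx t 2)) :
    ExtendsToBW t L a b cc := by
  classical
  set Lp : ℕ → Finset ℕ := fun m => L (bwVtx t m) with hLpdef
  have hLp1 : 3 ≤ (Lp 1).card := hL 1 (by omega) (by omega)
  have hLp2 : 3 ≤ (Lp 2).card := hL 2 (by omega) (by omega)
  -- greedy colors from the far end: F k is the color of path vertex t+1-k
  set F : ℕ → ℕ := fun k => Nat.rec cc (fun k ih => bwPick (Lp (t - k) \ {b, ih})) k
    with hFdef
  have hFs : ∀ k, F (k + 1) = bwPick (Lp (t - k) \ {b, F k}) := fun k => rfl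
  have hF0 : F 0 = cc := rfl
  have hFmem : ∀ k, k ≤ t - 2 → F k ∈ Lp (t + 1 - k) ∧ F k ≠ b := by
    intro k hk
    cases k with
    | zero =>
      constructor
      · show cc ∈ Lp (t + 1)
        rw [hLpdef]; simpa [bwVtx_last] using hcc
      · exact Ne.symm hbcc
    | succ k =>
      have hne : (Lp (t - k) \ {b, F k}).Nonempty :=
        bw_sdiff_pair_nonempty (hL (t - k) (by omega) (by omega)) _ _
      have hm := bwPick_mem hne
      rw [← hFs k] at hm
      rw [Finset.mem_sdiff, Finset.mem_insert, Finset.mem_singleton] at hm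
      have he : t + 1 - (k + 1) = t - k := by omega
      rw [he]
      exact ⟨hm.1, fun h => hm.2 (Or.inl h)⟩
  have hFstep : ∀ k, k + 1 ≤ t - 2 → F (k + 1) ≠ F k := by
    intro k hk
    have hne : (Lp (t - k) \ {b, F k}).Nonempty :=
      bw_sdiff_pair_nonempty (hL (t - k) (by omega) (by omega)) _ _
    have hm := bwPick_mem hne
    rw [← hFs k, Finset.mem_sdiff, Finset.mem_insert, Finset.mem_singleton] at hm
    exact fun h => hm.2 (Or.inr h)
  -- choose colors for vertices 1 and 2
  obtain ⟨c1, c2, hc1L, hc2L, hc1a, hc1b, hc12, hc2b, hc2d⟩ :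
      ∃ c1 c2, c1 ∈ Lp 1 ∧ c2 ∈ Lp 2 ∧ c1 ≠ a ∧ c1 ≠ b ∧ c1 ≠ c2 ∧ c2 ≠ b ∧
        c2 ≠ F (t - 2) := by
    rcases hcase with h | h | ⟨z, hz, hza, hzb, hz2⟩
    · have h2 := bwPick_mem (bw_sdiff_pair_nonempty hLp2 b (F (t - 2)))
      rw [Finset.mem_sdiff, Finset.mem_insert, Finset.mem_singleton] at h2
      have h1 := bwPick_mem (bw_sdiff_pair_nonempty hLp1 b (bwPick (Lp 2 \ {b, F (t - 2)})))
      rw [Finset.mem_sdiff, Finset.mem_insert, Finset.mem_singleton] at h1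
      refine ⟨_, _, h1.1, h2.1, fun e => h (e ▸ h1.1), fun e => h1.2 (Or.inl e),
        fun e => h1.2 (Or.inr e), fun e => h2.2 (Or.inl e), fun e => h2.2 (Or.inr e)⟩
    · have hS : (Lp 1 \ {a, b}).Nonempty := bw_sdiff_pair_nonempty hLp1 a b
      have h1 := bwPick_mem hS
      rw [Finset.mem_sdiff, Finset.mem_insert, Finset.mem_singleton] at h1
      have h2 := bwPick_mem (bw_sdiff_pair_nonempty hLp2 (F (t - 2)) (bwPick (Lp 1 \ {a, b})))
      rw [Finset.mem_sdiff, Finset.mem_insert, Finset.mem_singleton] at h2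
      refine ⟨_, _, h1.1, h2.1, fun e => h1.2 (Or.inl e), fun e => h1.2 (Or.inr e),
        fun e => h2.2 (Or.inr e.symm), fun e => h (e ▸ h2.1), fun e => h2.2 (Or.inl e)⟩
    · have h2 := bwPick_mem (bw_sdiff_pair_nonempty hLp2 b (F (t - 2)))
      rw [Finset.mem_sdiff, Finset.mem_insert, Finset.mem_singleton] at h2
      refine ⟨z, _, hz, h2.1, hza, hzb, fun e => hz2 (e ▸ h2.1),
        fun e => h2.2 (Or.inl e), fun e => h2.2 (Or.inr e)⟩
  -- the full coloring
  set col : BWVert t → ℕ := fun v => Option.elim v b (fun j =>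
    if j.val = 0 then a else if j.val = 1 then c1 else if j.val = 2 then c2
    else F (t + 1 - j.val)) with hcoldef
  have hLpj : ∀ j : Fin (t + 2), Lp j.val = L (some j) := by
    intro j; show L (bwVtx t j.val) = L (some j); rw [bwVtx_eq]
  have hcolsome : ∀ j : Fin (t + 2), col (some j) =
      if j.val = 0 then a else if j.val = 1 then c1 else if j.val = 2 then c2
      else F (t + 1 - j.val) := fun j => rfl
  -- col of each path vertex is in its list and differs from b
  have hmain : ∀ j : Fin (t + 2), col (some j) ∈ L (some j) ∧ col (some j) ≠ b := by
    intro j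
    have hjlt := j.isLt
    rw [hcolsome]
    rcases Nat.lt_or_ge j.val 3 with h3 | h3
    · interval_cases h : j.val
      · simp only [if_pos rfl]
        refine ⟨?_, hab⟩
        have : j = 0 := Fin.ext (by simpa using h)
        rw [this]; exact ha
      · rw [if_neg (by omega), if_pos rfl]
        exact ⟨by rw [← hLpj, h]; exact hc1L, hc1b⟩
      · rw [if_neg (by omega), if_neg (by omega), if_pos rfl]
        exact ⟨by rw [← hLpj, h]; exact hc2L, hc2b⟩
    · rw [if_neg (by omega), if_neg (by omega), if_neg (by omega)]
      have hk : t + 1 - j.val ≤ t - 2 := by omega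
      have := hFmem _ hk
      have he : t + 1 - (t + 1 - j.val) = j.val := by omega
      rw [he] at this
      exact ⟨by rw [← hLpj]; exact this.1, this.2⟩
  -- consecutive path vertices get different colors
  have hstep : ∀ i j : Fin (t + 2), i.val + 1 = j.val → col (some i) ≠ col (some j) := by
    intro i j hij
    have hilt := i.isLt
    have hjlt := j.isLt
    rw [hcolsome, hcolsome]
    rcases Nat.lt_or_ge i.val 3 with h3 | h3
    · interval_cases h : i.val
      · rw [if_pos rfl, if_neg (by omega), if_pos (by omega)]
        exact Ne.symm hc1a
      · rw [if_neg (by omega), if_pos rfl, if_neg (by omega), if_neg (by omega),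
          if_pos (by omega)]
        exact hc12
      · rw [if_neg (by omega), if_neg (by omega), if_pos rfl, if_neg (by omega),
          if_neg (by omega), if_neg (by omega)]
        have he : t + 1 - j.val = t - 2 := by omega
        rw [he]; exact hc2d
    · rw [if_neg (by omega), if_neg (by omega), if_neg (by omega), if_neg (by omega),
        if_neg (by omega), if_neg (by omega)]
      have he : t + 1 - i.val = (t + 1 - j.val) + 1 := by omega
      rw [he]
      exact hFstep (t + 1 - j.val) (by omega)
  refine ⟨col, ⟨?_, ?_⟩, ?_, rfl, ?_⟩
  · intro v
    match v with
    | none => exact hb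
    | some j => exact (hmain j).1
  · intro v w hvw
    match v, w with
    | none, none => exact absurd hvw (by simp [bwAdj])
    | none, some j => exact Ne.symm (hmain j).2
    | some j, none => exact (hmain j).2
    | some i, some j =>
      rcases hvw with h | h
      · exact hstep i j h
      · exact Ne.symm (hstep j i h)
  · rw [hcolsome]; simp
  · rw [hcolsome]
    have : (Fin.last (t + 1)).val = t + 1 := rfl
    rw [this, if_neg (by omega), if_neg (by omega), if_neg (by omega)]
    simpa using hF0

lemma bw_key (t : ℕ) (ht : 2 ≤ t) (L : BWVert t → Finset ℕ)
    (hL : ∀ v : BWVert t, v ≠ some 0 → v ≠ none → v ≠ some (Fin.last (t + 1)) →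
      3 ≤ (L v).card)
    (a b cc : ℕ) (ha : a ∈ L (some 0)) (hb : b ∈ L none)
    (hcc : cc ∈ L (some (Fin.last (t + 1))))
    (hab : a ≠ b) (hbcc : b ≠ cc)
    (hne : ¬ ExtendsToBW t L a b cc) :
    a ∈ L (bwVtx t 1) ∧ b ∈ L (bwVtx t 2) ∧
      ∀ z ∈ L (bwVtx t 1), z ≠ a → z ≠ b → z ∈ L (bwVtx t 2) := by
  have hL' : ∀ m : ℕ, 1 ≤ m → m ≤ t → 3 ≤ (L (bwVtx t m)).card := by
    intro m h1 h2
    have hm : min m (t + 1) = m := by omega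
    apply hL
    · intro h; rw [bwVtx] at h
      have := Option.some_injective _ h
      have := congrArg Fin.val this
      simp [hm] at this; omega
    · intro h; rw [bwVtx] at h; exact Option.some_ne_none _ h
    · intro h; rw [bwVtx] at h
      have := Option.some_injective _ h
      have := congrArg Fin.val this
      simp [hm, Fin.last] at this; omega
  refine ⟨?_, ?_, ?_⟩
  · by_contra h
    exact hne (bw_extend t ht L hL' a b cc ha hb hcc hab hbcc (Or.inl h))
  · by_contra h
    exact hne (bw_extend t ht L hL' a b cc ha hb hcc hab hbcc (Or.inr (Or.inl h)))
  · intro z hz hza hzb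
    by_contra h
    exact hne (bw_extend t ht L hL' a b cc ha hb hcc hab hbcc
      (Or.inr (Or.inr ⟨z, hz, hza, hzb, h⟩)))

def bwRev (t : ℕ) : BWVert t → BWVert t := Option.map Fin.rev

lemma bwRev_rev (t : ℕ) (v : BWVert t) : bwRev t (bwRev t v) = v := by
  cases v <;> simp [bwRev, Fin.rev_rev]

lemma bwRev_adj (t : ℕ) (v w : BWVert t) (h : bwAdj t v w) :
    bwAdj t (bwRev t v) (bwRev t w) := by
  match v, w with
  | none, none => exact h
  | none, some j => exact trivial
  | some i, none => exact trivial
  | some i, some j =>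
    have hi := i.isLt
    have hj := j.isLt
    simp only [bwAdj, bwRev, Option.map_some, Fin.val_rev] at h ⊢
    omega

lemma bwRev_zero (t : ℕ) : bwRev t (some 0) = some (Fin.last (t + 1)) := by
  simp [bwRev]

lemma bwRev_last (t : ℕ) : bwRev t (some (Fin.last (t + 1))) = some 0 := by
  simp [bwRev, Fin.rev_last]

/-- Proposition 2.8(1) (the broken-wheel conclusion made explicit): `pi` is one endpoint
`p_i` of the principal path and `pother` the other endpoint `p_{1-i}`. If `|L(p_i)| ≥ 2`
and no color of `L(p_i)` is `(P, G)`-universal, then either `|V(G)| ≤ 4` or, letting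
`p_i x y` be the initial 2-path of `G - q` starting at `p_i`, we have
`L(p_i) ⊆ L(x) ∩ L(y)`.  (If `pi = p₀` then `x, y` are the path vertices of indices
`1, 2`; if `pi = p₁`, of indices `t, t - 1`.) -/
theorem bwheel_no_universal_color (t : ℕ) (L : BWVert t → Finset ℕ)
    (hL : ∀ v : BWVert t, v ≠ some 0 → v ≠ none → v ≠ some (Fin.last (t + 1)) →
      3 ≤ (L v).card)
    (h0 : (L (some 0)).Nonempty) (h1 : (L (some (Fin.last (t + 1)))).Nonempty)
    (pi pother : BWVert t)
    (hends : (pi = some 0 ∧ pother = some (Fin.last (t + 1))) ∨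
      (pi = some (Fin.last (t + 1)) ∧ pother = some 0))
    (hcard : 2 ≤ (L pi).card)
    (huniv : ∀ a ∈ L pi, ∃ b ∈ L (none : BWVert t), b ≠ a ∧
      ∃ cc ∈ L pother, cc ≠ b ∧
        ¬ ∃ c : BWVert t → ℕ, IsBWColoring t L c ∧
          c pi = a ∧ c none = b ∧ c pother = cc) :
    t + 3 ≤ 4 ∨ ∃ x y : Fin (t + 2),
      x.val = (if pi = some 0 then 1 else t) ∧
      y.val = (if pi = some 0 then 2 else t - 1) ∧
      L pi ⊆ L (some x) ∩ L (some y) := by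
  by_cases htt : t + 3 ≤ 4
  · exact Or.inl htt
  have ht : 2 ≤ t := by omega
  right
  rcases hends with ⟨hpi, hpo⟩ | ⟨hpi, hpo⟩
  · subst hpi; subst hpo
    have hkey : ∀ a ∈ L (some (0 : Fin (t + 2))), ∃ b,
        a ∈ L (bwVtx t 1) ∧ b ∈ L (bwVtx t 2) ∧
          ∀ z ∈ L (bwVtx t 1), z ≠ a → z ≠ b → z ∈ L (bwVtx t 2) := by
      intro a ha
      obtain ⟨b, hbL, hba, cc, hccL, hccb, hfail⟩ := huniv a ha
      exact ⟨b, bw_key t ht L hL a b cc ha hbL hccL (Ne.symm hba) (Ne.symm hccb) hfail⟩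
    refine ⟨⟨min 1 (t + 1), by omega⟩, ⟨min 2 (t + 1), by omega⟩, ?_, ?_, ?_⟩
    · rw [if_pos rfl]; show min 1 (t + 1) = 1; omega
    · rw [if_pos rfl]; show min 2 (t + 1) = 2; omega
    · intro α hα
      rw [Finset.mem_inter]
      obtain ⟨b, h1, h2, hcl⟩ := hkey α hα
      refine ⟨h1, ?_⟩
      obtain ⟨α', hα'L, hα'ne⟩ := Finset.exists_mem_ne (s := L (some 0)) (by omega) α
      obtain ⟨b', h1', h2', hcl'⟩ := hkey α' hα'L
      by_cases hab' : α = b'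
      · rw [hab']; exact h2'
      · exact hcl' α h1 (fun e => hα'ne e.symm) hab'
  · subst hpi; subst hpo
    set L' : BWVert t → Finset ℕ := fun v => L (bwRev t v) with hL'def
    have hL'int : ∀ v : BWVert t, v ≠ some 0 → v ≠ none →
        v ≠ some (Fin.last (t + 1)) → 3 ≤ (L' v).card := by
      intro v h0 hn hl
      apply hL (bwRev t v)
      · intro h; apply hl; rw [← bwRev_rev t v, h, bwRev_zero]
      · intro h; apply hn; rw [← bwRev_rev t v, h]; rfl
      · intro h; apply h0; rw [← bwRev_rev t v, h, bwRev_last]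
    have hkey : ∀ a ∈ L (some (Fin.last (t + 1))), ∃ b,
        a ∈ L' (bwVtx t 1) ∧ b ∈ L' (bwVtx t 2) ∧
          ∀ z ∈ L' (bwVtx t 1), z ≠ a → z ≠ b → z ∈ L' (bwVtx t 2) := by
      intro a ha
      obtain ⟨b, hbL, hba, cc, hccL, hccb, hfail⟩ := huniv a ha
      have hne : ¬ ExtendsToBW t L' a b cc := by
        rintro ⟨c', ⟨hcm, hca⟩, he1, he2, he3⟩
        refine hfail ⟨fun v => c' (bwRev t v), ⟨?_, ?_⟩, ?_, he2, ?_⟩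
        · intro v
          have h := hcm (bwRev t v)
          simp only [hL'def] at h
          rwa [bwRev_rev] at h
        · intro v w hvw
          exact hca _ _ (bwRev_adj t v w hvw)
        · show c' (bwRev t (some (Fin.last (t + 1)))) = a
          rw [bwRev_last]; exact he1
        · show c' (bwRev t (some 0)) = cc
          rw [bwRev_zero]; exact he3
      have ha' : a ∈ L' (some 0) := by
        show a ∈ L (bwRev t (some 0)); rw [bwRev_zero]; exact ha
      have hcc' : cc ∈ L' (some (Fin.last (t + 1))) := by
        show cc ∈ L (bwRev t (some (Fin.last (t + 1)))); rw [bwRev_last]; exact hccL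
      exact ⟨b, bw_key t ht L' hL'int a b cc ha' hbL hcc'
        (Ne.symm hba) (Ne.symm hccb) hne⟩
    have hne0 : (some (Fin.last (t + 1)) : BWVert t) ≠ some 0 := by
      simp [Fin.ext_iff]
    refine ⟨Fin.rev ⟨min 1 (t + 1), by omega⟩, Fin.rev ⟨min 2 (t + 1), by omega⟩,
      ?_, ?_, ?_⟩
    · rw [if_neg hne0, Fin.val_rev]; show t + 2 - (min 1 (t + 1) + 1) = t; omega
    · rw [if_neg hne0, Fin.val_rev]; show t + 2 - (min 2 (t + 1) + 1) = t - 1; omega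
    · intro α hα
      rw [Finset.mem_inter]
      obtain ⟨b, h1, h2, hcl⟩ := hkey α hα
      refine ⟨h1, ?_⟩
      obtain ⟨α', hα'L, hα'ne⟩ := Finset.exists_mem_ne (s := L (some (Fin.last (t + 1)))) (by omega) α
      obtain ⟨b', h1', h2', hcl'⟩ := hkey α' hα'L
      by_cases hab' : α = b'
      · rw [hab']; exact h2'
      · exact hcl' α h1 (fun e => hα'ne e.symm) hab'
end
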